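/- Let m, M, N be positive integers, α > β > 0, n ≥ 2 an integer, p = α·log(n)/n^(d-1), q = β·log(n)/n^(d-1) ∈ (0,1), M = C(m-1, d-1), N = C(m, d-1). Suppose W₁,...,W_M are i.i.d. Bern(p) and Z₁,...,Z_N are i.i.d. Bern(q), independent of the W's. Then for any γ ∈ ℝ, Pr[∑_{i=1}^M W_i - ∑_{i=1}^N Z_i ≤ (γ/(d-1)!)·log n] ≤ n^{-M(√α - √β)²/n^(d-1) + γ·log(α/β)/(2(d-1)!) + (N - M)(√(αβ) - β)/n^(d-1)}. -/

import Mathlib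

open MeasureTheory ProbabilityTheory

noncomputable def bernoulliLaw (p : ℝ) : Measure ℝ :=
  ENNReal.ofReal p • Measure.dirac (1 : ℝ) + ENNReal.ofReal (1 - p) • Measure.dirac (0 : ℝ)

lemma integrable_bernoulliLaw {f : ℝ → ℝ} (hf : Measurable f) (p : ℝ) :
    Integrable f (bernoulliLaw p) := by
  unfold bernoulliLaw
  rw [integrable_add_measure]
  constructor <;>
  · refine Integrable.smul_measure ?_ ENNReal.ofReal_ne_top
    refine ⟨hf.aestronglyMeasurable, ?_⟩
    simp only [HasFiniteIntegral, MeasureTheory.lintegral_dirac]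
    exact ENNReal.coe_lt_top

lemma integral_bernoulliLaw {f : ℝ → ℝ} (hf : Measurable f) {p : ℝ} (hp0 : 0 ≤ p) (hp1 : p ≤ 1) :
    ∫ x, f x ∂(bernoulliLaw p) = p * f 1 + (1 - p) * f 0 := by
  unfold bernoulliLaw
  rw [integral_add_measure, integral_smul_measure, integral_smul_measure,
    integral_dirac, integral_dirac, ENNReal.toReal_ofReal hp0,
    ENNReal.toReal_ofReal (by linarith)]
  · simp
  · refine Integrable.smul_measure ?_ ENNReal.ofReal_ne_top
    exact ⟨hf.aestronglyMeasurable, by simp only [HasFiniteIntegral, MeasureTheory.lintegral_dirac]; exact ENNReal.coe_lt_top⟩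
  · refine Integrable.smul_measure ?_ ENNReal.ofReal_ne_top
    exact ⟨hf.aestronglyMeasurable, by simp only [HasFiniteIntegral, MeasureTheory.lintegral_dirac]; exact ENNReal.coe_lt_top⟩

lemma bern_int {Ω : Type*} [MeasurableSpace Ω] {μ : Measure Ω} {X : Ω → ℝ}
    (hX : Measurable X) {p : ℝ} (hlaw : Measure.map X μ = bernoulliLaw p) (t : ℝ) :
    Integrable (fun ω => Real.exp (t * X ω)) μ := by
  have hf : Measurable fun x => Real.exp (t * x) := (measurable_id.const_mul t).exp
  have := integrable_bernoulliLaw hf p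
  rw [← hlaw] at this
  exact (integrable_map_measure hf.aestronglyMeasurable hX.aemeasurable).mp this

lemma bern_mgf {Ω : Type*} [MeasurableSpace Ω] {μ : Measure Ω} {X : Ω → ℝ}
    (hX : Measurable X) {p : ℝ} (hp0 : 0 ≤ p) (hp1 : p ≤ 1)
    (hlaw : Measure.map X μ = bernoulliLaw p) (t : ℝ) :
    mgf X μ t = 1 - p + p * Real.exp t := by
  have hf : Measurable fun x => Real.exp (t * x) := (measurable_id.const_mul t).exp
  have h1 : mgf X μ t = ∫ x, Real.exp (t * x) ∂(Measure.map X μ) := by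
    rw [integral_map hX.aemeasurable hf.aestronglyMeasurable]; rfl
  rw [h1, hlaw, integral_bernoulliLaw hf hp0 hp1]
  simp [mul_comm]
  ring

lemma sqrt_eq_exp_half_log {x : ℝ} (hx : 0 < x) :
    Real.sqrt x = Real.exp (Real.log x / 2) := by
  rw [← Real.exp_log (Real.sqrt_pos.mpr hx), Real.log_sqrt hx.le]

theorem stmt_9 {Ω : Type*} [MeasurableSpace Ω] (μ : Measure Ω) [IsProbabilityMeasure μ]
    (m n d : ℕ) (hm : 0 < m) (hn : 2 ≤ n) (hd : 2 ≤ d)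
    (α β : ℝ) (hβ : 0 < β) (hβα : β < α)
    (p q : ℝ)
    (hpdef : p = α * Real.log n / (n : ℝ) ^ (d - 1))
    (hqdef : q = β * Real.log n / (n : ℝ) ^ (d - 1))
    (hp : p ∈ Set.Ioo (0 : ℝ) 1) (hq : q ∈ Set.Ioo (0 : ℝ) 1)
    (M N : ℕ) (hM : M = (m - 1).choose (d - 1)) (hN : N = m.choose (d - 1))
    (hMpos : 0 < M) (hNpos : 0 < N)
    (W : Fin M → Ω → ℝ) (Z : Fin N → Ω → ℝ)
    (hWmeas : ∀ i, Measurable (W i)) (hZmeas : ∀ i, Measurable (Z i))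
    (hWlaw : ∀ i, Measure.map (W i) μ = bernoulliLaw p)
    (hZlaw : ∀ i, Measure.map (Z i) μ = bernoulliLaw q)
    (hindep : iIndepFun
      (Sum.elim W Z : Fin M ⊕ Fin N → Ω → ℝ) μ)
    (γ : ℝ) :
    μ {ω | ∑ i, W i ω - ∑ i, Z i ω ≤ γ / (Nat.factorial (d - 1)) * Real.log n}
      ≤ ENNReal.ofReal ((n : ℝ) ^
          (-(M * (Real.sqrt α - Real.sqrt β) ^ 2 / (n : ℝ) ^ (d - 1))
            + γ * Real.log (α / β) / (2 * Nat.factorial (d - 1))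
            + ((N : ℝ) - M) * (Real.sqrt (α * β) - β) / (n : ℝ) ^ (d - 1))) := by
  have hα : 0 < α := hβ.trans hβα
  have hn1 : (1 : ℝ) < (n : ℝ) := by exact_mod_cast hn.trans_lt' (by norm_num)
  have hlogn : 0 < Real.log n := Real.log_pos hn1
  have hnd : 0 < ((n : ℝ) ^ (d - 1)) := by positivity
  set L : ℝ := Real.log n / (n : ℝ) ^ (d - 1) with hLdef
  have hL : 0 < L := div_pos hlogn hnd
  have hpL : p = α * L := by rw [hpdef, hLdef]; ring
  have hqL : q = β * L := by rw [hqdef, hLdef]; ring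
  have hαβ1 : (1 : ℝ) < α / β := (one_lt_div hβ).mpr hβα
  have hlogαβ : 0 < Real.log (α / β) := Real.log_pos hαβ1
  set t : ℝ := -(Real.log (α / β) / 2) with htdef
  have ht0 : t ≤ 0 := by rw [htdef]; linarith
  -- exp t and exp (-t)
  have hexpt : Real.exp t = Real.sqrt (β / α) := by
    rw [htdef, sqrt_eq_exp_half_log (div_pos hβ hα)]
    congr 1
    rw [Real.log_div hβ.ne' hα.ne', Real.log_div hα.ne' hβ.ne']
    ring
  have hexpnt : Real.exp (-t) = Real.sqrt (α / β) := by
    rw [htdef, neg_neg, sqrt_eq_exp_half_log (div_pos hα hβ)]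
  -- the family Y
  set Y : Fin M ⊕ Fin N → Ω → ℝ := Sum.elim W (fun j => -(Z j)) with hYdef
  have hYmeas : ∀ k, Measurable (Y k) := by
    rintro (i | j)
    · exact hWmeas i
    · exact (hZmeas j).neg
  have hYindep : iIndepFun Y μ := by
    have h := hindep.comp
      (fun k => Sum.elim (fun _ => (id : ℝ → ℝ)) (fun _ => (Neg.neg : ℝ → ℝ)) k)
      (by rintro (i | j) <;> dsimp <;> [exact measurable_id; exact measurable_neg])
    convert h using 1
    funext k
    cases k <;> rfl
  have hYint : ∀ k, Integrable (fun ω => Real.exp (t * Y k ω)) μ := by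
    rintro (i | j)
    · exact bern_int (hWmeas i) (hWlaw i) t
    · have := bern_int (hZmeas j) (hZlaw j) (-t)
      convert this using 2 with ω
      simp [hYdef]
  set ε : ℝ := γ / (Nat.factorial (d - 1)) * Real.log n with hεdef
  have h_int : Integrable (fun ω => Real.exp (t * (∑ k, Y k) ω)) μ :=
    hYindep.integrable_exp_mul_sum hYmeas (fun k _ => hYint k)
  have hchern := measure_le_le_exp_mul_mgf (μ := μ) (X := ∑ k, Y k) ε ht0 h_int
  -- identify the event
  have hset : {ω | (∑ k, Y k) ω ≤ ε} =
      {ω | ∑ i, W i ω - ∑ i, Z i ω ≤ γ / (Nat.factorial (d - 1)) * Real.log n} := by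
    ext ω
    simp only [Set.mem_setOf_eq, Finset.sum_apply, Fintype.sum_sum_type, hYdef, Sum.elim_inl,
      Sum.elim_inr, Pi.neg_apply, Finset.sum_neg_distrib, hεdef]
    rw [← sub_eq_add_neg]
  rw [hset] at hchern
  -- compute the mgf
  have hmgf : mgf (∑ k, Y k) μ t =
      (1 - p + p * Real.exp t) ^ M * (1 - q + q * Real.exp (-t)) ^ N := by
    rw [hYindep.mgf_sum hYmeas, Fintype.prod_sum_type]
    have h1 : ∀ i : Fin M, mgf (Y (Sum.inl i)) μ t = 1 - p + p * Real.exp t := fun i =>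
      bern_mgf (hWmeas i) hp.1.le hp.2.le (hWlaw i) t
    have h2 : ∀ j : Fin N, mgf (Y (Sum.inr j)) μ t = 1 - q + q * Real.exp (-t) := by
      intro j
      have : Y (Sum.inr j) = -(Z j) := rfl
      rw [this, mgf_neg]
      exact bern_mgf (hZmeas j) hq.1.le hq.2.le (hZlaw j) (-t)
    simp only [h1, h2, Finset.prod_const, Finset.card_univ, Fintype.card_fin]
  -- bound the two factors
  set sa := Real.sqrt α with hsa
  set sb := Real.sqrt β with hsb
  have hsa2 : sa ^ 2 = α := Real.sq_sqrt hα.le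
  have hsb2 : sb ^ 2 = β := Real.sq_sqrt hβ.le
  have hsapos : 0 < sa := Real.sqrt_pos.mpr hα
  have hsbpos : 0 < sb := Real.sqrt_pos.mpr hβ
  have hsab : Real.sqrt (α * β) = sa * sb := Real.sqrt_mul hα.le β
  have hA : p * Real.exp t = sa * sb * L := by
    rw [hexpt, hpL, Real.sqrt_div hβ.le, ← hsa, ← hsb, ← hsa2]
    field_simp
  have hB : q * Real.exp (-t) = sa * sb * L := by
    rw [hexpnt, hqL, Real.sqrt_div hα.le, ← hsa, ← hsb, ← hsb2]
    field_simp
  have hAle : 1 - p + p * Real.exp t ≤ Real.exp (sa * sb * L - α * L) := by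
    rw [hA]
    have := Real.add_one_le_exp (sa * sb * L - α * L)
    rw [hpL]; linarith
  have hBle : 1 - q + q * Real.exp (-t) ≤ Real.exp (sa * sb * L - β * L) := by
    rw [hB]
    have := Real.add_one_le_exp (sa * sb * L - β * L)
    rw [hqL]; linarith
  have hAnn : 0 ≤ 1 - p + p * Real.exp t := by
    have : 0 ≤ p * Real.exp t := mul_nonneg hp.1.le (Real.exp_pos _).le
    linarith [hp.2.le]
  have hBnn : 0 ≤ 1 - q + q * Real.exp (-t) := by
    have : 0 ≤ q * Real.exp (-t) := mul_nonneg hq.1.le (Real.exp_pos _).le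
    linarith [hq.2.le]
  -- combine
  have hbound : Real.exp (-t * ε) * mgf (∑ k, Y k) μ t ≤
      (n : ℝ) ^ (-(M * (sa - sb) ^ 2 / (n : ℝ) ^ (d - 1))
            + γ * Real.log (α / β) / (2 * Nat.factorial (d - 1))
            + ((N : ℝ) - M) * (sa * sb - β) / (n : ℝ) ^ (d - 1)) := by
    rw [hmgf]
    have h1 : (1 - p + p * Real.exp t) ^ M ≤ Real.exp ((M : ℝ) * (sa * sb * L - α * L)) := by
      calc (1 - p + p * Real.exp t) ^ M ≤ (Real.exp (sa * sb * L - α * L)) ^ M :=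
            pow_le_pow_left₀ hAnn hAle M
        _ = Real.exp ((M : ℝ) * (sa * sb * L - α * L)) := by
            rw [← Real.exp_nat_mul]
    have h2 : (1 - q + q * Real.exp (-t)) ^ N ≤ Real.exp ((N : ℝ) * (sa * sb * L - β * L)) := by
      calc (1 - q + q * Real.exp (-t)) ^ N ≤ (Real.exp (sa * sb * L - β * L)) ^ N :=
            pow_le_pow_left₀ hBnn hBle N
        _ = Real.exp ((N : ℝ) * (sa * sb * L - β * L)) := by
            rw [← Real.exp_nat_mul]
    calc Real.exp (-t * ε) * ((1 - p + p * Real.exp t) ^ M * (1 - q + q * Real.exp (-t)) ^ N)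
        ≤ Real.exp (-t * ε) * (Real.exp ((M : ℝ) * (sa * sb * L - α * L)) *
            Real.exp ((N : ℝ) * (sa * sb * L - β * L))) := by
          apply mul_le_mul_of_nonneg_left _ (Real.exp_pos _).le
          exact mul_le_mul h1 h2 (pow_nonneg hBnn N) (Real.exp_pos _).le
      _ = Real.exp (-t * ε + (M : ℝ) * (sa * sb * L - α * L) +
            (N : ℝ) * (sa * sb * L - β * L)) := by
          rw [← Real.exp_add, ← Real.exp_add]
          congr 1
          ring
      _ = (n : ℝ) ^ (-(M * (sa - sb) ^ 2 / (n : ℝ) ^ (d - 1))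
            + γ * Real.log (α / β) / (2 * Nat.factorial (d - 1))
            + ((N : ℝ) - M) * (sa * sb - β) / (n : ℝ) ^ (d - 1)) := by
          rw [Real.rpow_def_of_pos (by linarith : (0:ℝ) < (n:ℝ))]
          congr 1
          have hfac : (0 : ℝ) < (Nat.factorial (d - 1) : ℝ) := by
            exact_mod_cast Nat.factorial_pos (d - 1)
          rw [htdef, hεdef, hLdef]
          have hβeq : β = sb ^ 2 := hsb2.symm
          have hαeq : α = sa ^ 2 := hsa2.symm
          rw [hβeq, hαeq]
          field_simp
          ring
  rw [hsab]
  refine le_trans ?_ (ENNReal.ofReal_le_ofReal hbound)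
  rw [← ENNReal.ofReal_toReal (measure_ne_top μ _)]
  exact ENNReal.ofReal_le_ofReal hchern
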